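/- Let M₀ be a real symmetric n×n matrix with spectral decomposition M₀ = UΛUᵀ where U is orthogonal and Λ is diagonal with entries λ₁, …, λₙ. Then for every positive semi-definite real symmetric n×n matrix M, ‖M − M₀‖²_F = ‖UᵀMU − Λ‖²_F ≥ Σᵢ ((UᵀMU)ᵢᵢ − λᵢ)² ≥ Σ_{i : λᵢ < 0} λᵢ², where the last inequality uses that the diagonal entries of the positive semi-definite matrix UᵀMU are nonnegative. -/

import Mathlib

open Matrix Finset

/-- The positive part of a real symmetric matrix: keep only the nonnegative
eigenvalues in the spectral decomposition. -/
noncomputable def posPart {n : ℕ} (M : Matrix (Fin n) (Fin n) ℝ) (hM : M.IsHermitian) :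
    Matrix (Fin n) (Fin n) ℝ :=
  ∑ i, max 0 (hM.eigenvalues i) •
    Matrix.vecMulVec (fun j => hM.eigenvectorBasis i j) (fun j => hM.eigenvectorBasis i j)

/-- The squared Frobenius norm of a real matrix. -/
def frobSq {m n : ℕ} (M : Matrix (Fin m) (Fin n) ℝ) : ℝ :=
  ∑ i, ∑ j, (M i j) ^ 2

/-- The Frobenius norm of a real matrix. -/
noncomputable def frobNorm {m n : ℕ} (M : Matrix (Fin m) (Fin n) ℝ) : ℝ :=
  Real.sqrt (∑ i, ∑ j, (M i j) ^ 2)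

lemma frobSq_eq_trace {n : ℕ} (A : Matrix (Fin n) (Fin n) ℝ) :
    frobSq A = Matrix.trace (Aᵀ * A) := by
  simp [frobSq, Matrix.trace, Matrix.mul_apply, Matrix.diag, sq]
  rw [Finset.sum_comm]

lemma frobSq_conj {n : ℕ} (A U : Matrix (Fin n) (Fin n) ℝ) (hU : U * Uᵀ = 1) :
    frobSq (Uᵀ * A * U) = frobSq A := by
  have hU' : Uᵀ * U = 1 := mul_eq_one_comm.mp hU
  rw [frobSq_eq_trace, frobSq_eq_trace]
  have hcancel : ∀ X : Matrix (Fin n) (Fin n) ℝ, U * (Uᵀ * X) = X := fun X => by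
    rw [← Matrix.mul_assoc, hU, Matrix.one_mul]
  have : (Uᵀ * A * U)ᵀ * (Uᵀ * A * U) = Uᵀ * (Aᵀ * A) * U := by
    simp only [Matrix.transpose_mul, Matrix.transpose_transpose, Matrix.mul_assoc, hcancel]
  rw [this, Matrix.trace_mul_cycle, hU,
    Matrix.one_mul]

/-- key estimate for the nearest-PSD-matrix lemma: for M₀ = UΛUᵀ with U
orthogonal and any PSD matrix M, ‖M − M₀‖²_F = ‖UᵀMU − Λ‖²_F ≥ Σᵢ((UᵀMU)ᵢᵢ − λᵢ)²
≥ Σ_{λᵢ<0} λᵢ². -/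
theorem frobSq_psd_approx_key_estimate {n : ℕ} (M₀ U : Matrix (Fin n) (Fin n) ℝ)
    (lam : Fin n → ℝ) (hU : U * Uᵀ = 1) (hM₀ : M₀ = U * Matrix.diagonal lam * Uᵀ) :
    ∀ M : Matrix (Fin n) (Fin n) ℝ, M.PosSemidef →
      frobSq (M - M₀) = frobSq (Uᵀ * M * U - Matrix.diagonal lam) ∧
      (∑ i, ((Uᵀ * M * U) i i - lam i) ^ 2) ≤ frobSq (Uᵀ * M * U - Matrix.diagonal lam) ∧
      (∑ i ∈ Finset.univ.filter (fun i => lam i < 0), (lam i) ^ 2) ≤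
        ∑ i, ((Uᵀ * M * U) i i - lam i) ^ 2 := by
  intro M hM
  have hU' : Uᵀ * U = 1 := mul_eq_one_comm.mp hU
  set B := Uᵀ * M * U with hB
  -- B is PSD
  have hBpsd : B.PosSemidef := by
    have := hM.conjTranspose_mul_mul_same U
    simpa [Matrix.conjTranspose_eq_transpose_of_trivial] using this
  have hBdiag : ∀ i, 0 ≤ B i i := fun i => by
    exact hBpsd.diag_nonneg
  refine ⟨?_, ?_, ?_⟩
  · have hkey : Uᵀ * (M - M₀) * U = B - Matrix.diagonal lam := by
      rw [hM₀]
      rw [Matrix.mul_sub, Matrix.sub_mul]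
      congr 1
      calc Uᵀ * (U * Matrix.diagonal lam * Uᵀ) * U
          = (Uᵀ * U) * Matrix.diagonal lam * (Uᵀ * U) := by
            simp only [Matrix.mul_assoc]
        _ = Matrix.diagonal lam := by rw [hU']; simp
    rw [← hkey, frobSq_conj _ _ hU]
  · rw [frobSq]
    apply Finset.sum_le_sum
    intro i _
    have h := Finset.single_le_sum (f := fun j => ((B - Matrix.diagonal lam) i j) ^ 2)
      (fun j _ => sq_nonneg _) (Finset.mem_univ i)
    simpa [Matrix.sub_apply, Matrix.diagonal_apply_eq] using h
  · calc (∑ i ∈ Finset.univ.filter (fun i => lam i < 0), (lam i) ^ 2)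
        ≤ ∑ i ∈ Finset.univ.filter (fun i => lam i < 0), (B i i - lam i) ^ 2 := by
          apply Finset.sum_le_sum
          intro i hi
          rw [Finset.mem_filter] at hi
          have h1 : 0 ≤ B i i := hBdiag i
          have : -lam i ≤ B i i - lam i := by linarith
          have h2 : 0 ≤ -lam i := by linarith [hi.2]
          calc (lam i) ^ 2 = (-lam i) ^ 2 := by ring
            _ ≤ (B i i - lam i) ^ 2 := by
                apply sq_le_sq' <;> linarith
      _ ≤ ∑ i, (B i i - lam i) ^ 2 := by
          apply Finset.sum_le_sum_of_subset_of_nonneg (Finset.filter_subset _ _)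
          intro i _ _
          exact sq_nonneg _
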